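/- Let k ∈ ℕ⁺, γ ∈ (0,1), n ∈ ℕ. Consider two chunk-level policies π1^k, π2^k evaluated in chunk-level world models T1^k, T2^k respectively, under an n-chunk branched rollout: before the branch point, the processes use 'pre' policies and dynamics, and after the branch point they use 'post' policies and dynamics for n macro-steps. Assume per-step rewards lie in [0, r_max]. Suppose sup_t E_{s∼d_t^{π1^k}}[ D_TV(T1^{k,pre}(·|s, ã), T2^{k,pre}(·|s, ã)) ] ≤ ε_m^{k,pre} and analogously ≤ ε_m^{k,post} after the branch, and the policy total variation divergences are bounded by ε_π^{k,pre} before and ε_π^{k,post} after the branch. Then |V(π1^k) − V(π2^k)| ≤ (2 r_max/(1 − γ)) · [ n ε_m^{k,post} + (n+1) ε_π^{k,post} + ((γ^k)^{n+1}/(1 − γ^k)) (ε_m^{k,pre} + ε_π^{k,pre}) + (γ^k)^n ε_π^{k,pre} ]. -/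

import Mathlib

open MeasureTheory ProbabilityTheory

/-- Total variation distance between two measures:
`D_TV(μ, ν) = sup_{A measurable} |μ(A) − ν(A)|`. -/
noncomputable def tvDist {S : Type*} [MeasurableSpace S] (μ ν : Measure S) : ℝ :=
  ⨆ A : {A : Set S // MeasurableSet A}, |(μ A.1).toReal - (ν A.1).toReal|

/-- The joint state–action distribution obtained from a state distribution `μ`
and a (chunk-level) policy `π`. -/
noncomputable def saDist {S Act : Type*} [MeasurableSpace S] [MeasurableSpace Act]
    (μ : Measure S) (π : S → Measure Act) : Measure (S × Act) :=
  μ.bind (fun s => (π s).map (fun a => (s, a)))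

/-- The state distribution at macro-step `t` of a (possibly time-inhomogeneous) process
with initial state distribution `μ0`, policies `π t` and transition kernels `T t`. -/
noncomputable def stateDist {S Act : Type*} [MeasurableSpace S] [MeasurableSpace Act]
    (μ0 : Measure S) (π : ℕ → S → Measure Act) (T : ℕ → S × Act → Measure S) :
    ℕ → Measure S
  | 0 => μ0
  | t + 1 => (saDist (stateDist μ0 π T t) (π t)).bind (T t)

/-- The discounted occupancy measure `d = (1 − β) Σ_{t≥0} β^t d_t`. -/
noncomputable def occ {X : Type*} [MeasurableSpace X] (β : ℝ) (d : ℕ → Measure X) :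
    Measure X :=
  Measure.sum fun t => ENNReal.ofReal ((1 - β) * β ^ t) • d t

/-- The state–action distribution at macro-step `t` of the process
`(μ0, π, T)`. -/
noncomputable def saDistAt {S Act : Type*} [MeasurableSpace S] [MeasurableSpace Act]
    (μ0 : Measure S) (π : ℕ → S → Measure Act) (T : ℕ → S × Act → Measure S)
    (t : ℕ) : Measure (S × Act) :=
  saDist (stateDist μ0 π T t) (π t)

/-- The expected discounted return `V = (1/(1 − β)) ∫ r̃ d d^π`, where `d^π` is the
discounted state–action occupancy measure of the process `(μ0, π, T)` and `β` the
macro-step discount factor. -/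
noncomputable def value {S Act : Type*} [MeasurableSpace S] [MeasurableSpace Act]
    (β : ℝ) (rew : S × Act → ℝ)
    (μ0 : Measure S) (π : ℕ → S → Measure Act) (T : ℕ → S × Act → Measure S) : ℝ :=
  (1 - β)⁻¹ * ∫ p, rew p ∂(occ β (saDistAt μ0 π T))

section Aux

variable {X Y : Type*} [MeasurableSpace X] [MeasurableSpace Y]

lemma tv_nonneg (μ ν : Measure X) : 0 ≤ tvDist μ ν :=
  Real.iSup_nonneg fun _ => abs_nonneg _

lemma toReal_prob_le_one (μ : Measure X) [IsProbabilityMeasure μ] (A : Set X) :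
    (μ A).toReal ≤ 1 := by
  simpa using ENNReal.toReal_mono ENNReal.one_ne_top (prob_le_one (μ := μ) (s := A))

lemma tv_term_le_one (μ ν : Measure X) [IsProbabilityMeasure μ] [IsProbabilityMeasure ν]
    (A : Set X) : |(μ A).toReal - (ν A).toReal| ≤ 1 := by
  have h1 := toReal_prob_le_one μ A
  have h2 := toReal_prob_le_one ν A
  have h3 : 0 ≤ (μ A).toReal := ENNReal.toReal_nonneg
  have h4 : 0 ≤ (ν A).toReal := ENNReal.toReal_nonneg
  rw [abs_le]; constructor <;> linarith

lemma tv_bdd (μ ν : Measure X) [IsProbabilityMeasure μ] [IsProbabilityMeasure ν] :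
    BddAbove (Set.range fun A : {A : Set X // MeasurableSet A} =>
      |(μ A.1).toReal - (ν A.1).toReal|) := by
  refine ⟨1, ?_⟩
  rintro x ⟨A, rfl⟩
  exact tv_term_le_one μ ν A.1

lemma abs_apply_le_tv (μ ν : Measure X) [IsProbabilityMeasure μ] [IsProbabilityMeasure ν]
    {A : Set X} (hA : MeasurableSet A) :
    |(μ A).toReal - (ν A).toReal| ≤ tvDist μ ν :=
  le_ciSup (tv_bdd μ ν) ⟨A, hA⟩

lemma tv_le_one (μ ν : Measure X) [IsProbabilityMeasure μ] [IsProbabilityMeasure ν] :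
    tvDist μ ν ≤ 1 :=
  Real.iSup_le (fun A => tv_term_le_one μ ν A.1) zero_le_one

lemma tv_self (μ : Measure X) : tvDist μ μ = 0 :=
  le_antisymm (Real.iSup_le (fun _ => by simp) le_rfl) (tv_nonneg μ μ)

lemma nonempty_of_prob (μ : Measure X) [IsProbabilityMeasure μ] : Nonempty X := by
  rcases isEmpty_or_nonempty X with h | h
  · exfalso
    have h1 : μ Set.univ = 1 := measure_univ
    rw [Set.univ_eq_empty_iff.mpr h, measure_empty] at h1
    exact zero_ne_one h1
  · exact h

lemma integrable_of_bounds (ξ : Measure X) [IsFiniteMeasure ξ] {g : X → ℝ} {C : ℝ}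
    (hg : Measurable g) (h0 : ∀ x, 0 ≤ g x) (h1 : ∀ x, g x ≤ C) : Integrable g ξ :=
  (integrable_const C).mono' hg.aestronglyMeasurable
    (Filter.Eventually.of_forall fun x => by
      rw [Real.norm_eq_abs, abs_of_nonneg (h0 x)]; exact h1 x)

lemma integral_diff_bounds (μ' ν' : Measure X) [IsFiniteMeasure μ'] [IsFiniteMeasure ν']
    (h : ν' ≤ μ') {g : X → ℝ} {C : ℝ} (hg : Measurable g) (h0 : ∀ x, 0 ≤ g x)
    (h1 : ∀ x, g x ≤ C) :
    0 ≤ ∫ x, g x ∂μ' - ∫ x, g x ∂ν' ∧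
      ∫ x, g x ∂μ' - ∫ x, g x ∂ν' ≤ C * ((μ' Set.univ).toReal - (ν' Set.univ).toReal) := by
  set ξ : Measure X := μ' - ν' with hξ
  have hsum : ξ + ν' = μ' := Measure.sub_add_cancel_of_le h
  haveI hfin : IsFiniteMeasure ξ := by
    constructor
    calc ξ Set.univ ≤ (ξ + ν') Set.univ := by
          simp [Measure.add_apply]
      _ = μ' Set.univ := by rw [hsum]
      _ < ⊤ := measure_lt_top μ' _
  have hint : ∫ x, g x ∂μ' = ∫ x, g x ∂ξ + ∫ x, g x ∂ν' := by
    conv_lhs => rw [← hsum]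
    rw [integral_add_measure (integrable_of_bounds ξ hg h0 h1) (integrable_of_bounds ν' hg h0 h1)]
  have huniv : (ξ Set.univ).toReal = (μ' Set.univ).toReal - (ν' Set.univ).toReal := by
    rw [hξ, Measure.sub_apply MeasurableSet.univ h,
      ENNReal.toReal_sub_of_le (Measure.le_iff'.1 h Set.univ) (measure_ne_top μ' _)]
  constructor
  · rw [hint]
    have := integral_nonneg (μ := ξ) (f := g) h0
    linarith
  · rw [hint, ← huniv]
    have h2 : ∫ x, g x ∂ξ ≤ C * (ξ Set.univ).toReal := by
      calc ∫ x, g x ∂ξ ≤ ∫ _, C ∂ξ :=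
            integral_mono (integrable_of_bounds ξ hg h0 h1) (integrable_const C) h1
        _ = (ξ Set.univ).toReal * C := by rw [integral_const]; rw [smul_eq_mul]; rfl
        _ = C * (ξ Set.univ).toReal := mul_comm _ _
    linarith

lemma abs_integral_sub_le_tv (μ ν : Measure X) [IsProbabilityMeasure μ] [IsProbabilityMeasure ν]
    {g : X → ℝ} {C : ℝ} (hg : Measurable g) (h0 : ∀ x, 0 ≤ g x) (h1 : ∀ x, g x ≤ C) :
    |∫ x, g x ∂μ - ∫ x, g x ∂ν| ≤ C * tvDist μ ν := by
  have hX : Nonempty X := nonempty_of_prob μ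
  have hC : 0 ≤ C := le_trans (h0 hX.some) (h1 hX.some)
  obtain ⟨s, hs, hle1, hle2⟩ := hahn_decomposition (μ := μ) (ν := ν)
  have hres1 : ν.restrict s ≤ μ.restrict s := by
    refine Measure.le_iff.2 fun A hA => ?_
    rw [Measure.restrict_apply hA, Measure.restrict_apply hA]
    exact hle1 _ (hA.inter hs) Set.inter_subset_right
  have hres2 : μ.restrict sᶜ ≤ ν.restrict sᶜ := by
    refine Measure.le_iff.2 fun A hA => ?_
    rw [Measure.restrict_apply hA, Measure.restrict_apply hA]
    exact hle2 _ (hA.inter hs.compl) Set.inter_subset_right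
  obtain ⟨hd1, hd2⟩ := integral_diff_bounds (μ.restrict s) (ν.restrict s) hres1 hg h0 h1
  obtain ⟨hd3, hd4⟩ := integral_diff_bounds (ν.restrict sᶜ) (μ.restrict sᶜ) hres2 hg h0 h1
  have hsplit1 : ∫ x, g x ∂μ = ∫ x in s, g x ∂μ + ∫ x in sᶜ, g x ∂μ :=
    (integral_add_compl hs (integrable_of_bounds μ hg h0 h1)).symm
  have hsplit2 : ∫ x, g x ∂ν = ∫ x in s, g x ∂ν + ∫ x in sᶜ, g x ∂ν :=
    (integral_add_compl hs (integrable_of_bounds ν hg h0 h1)).symm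
  have ht1 : (μ.restrict s Set.univ).toReal - (ν.restrict s Set.univ).toReal ≤ tvDist μ ν := by
    rw [Measure.restrict_apply_univ, Measure.restrict_apply_univ]
    exact le_trans (le_abs_self _) (abs_apply_le_tv μ ν hs)
  have ht2 : (ν.restrict sᶜ Set.univ).toReal - (μ.restrict sᶜ Set.univ).toReal ≤ tvDist μ ν := by
    rw [Measure.restrict_apply_univ, Measure.restrict_apply_univ]
    refine le_trans ?_ (abs_apply_le_tv μ ν hs.compl)
    rw [abs_sub_comm]
    exact le_abs_self _
  have e1 : ∫ x in s, g x ∂μ - ∫ x in s, g x ∂ν ≤ C * tvDist μ ν :=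
    le_trans hd2 (mul_le_mul_of_nonneg_left ht1 hC)
  have e2 : ∫ x in sᶜ, g x ∂ν - ∫ x in sᶜ, g x ∂μ ≤ C * tvDist μ ν :=
    le_trans hd4 (mul_le_mul_of_nonneg_left ht2 hC)
  rw [abs_le, hsplit1, hsplit2]
  constructor <;> linarith

end Aux

section Aux2

variable {X Y : Type*} [MeasurableSpace X] [MeasurableSpace Y]

lemma measurable_pairKernel {π : X → Measure Y} (hπ : Measurable π)
    (hp : ∀ s, IsProbabilityMeasure (π s)) :
    Measurable fun s => (π s).map (fun a => (s, a)) := by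
  haveI : IsMarkovKernel (⟨π, hπ⟩ : Kernel X Y) := ⟨fun a => hp a⟩
  apply Measure.measurable_of_measurable_coe
  intro A hA
  simp_rw [Measure.map_apply measurable_prodMk_left hA]
  exact Kernel.measurable_kernel_prodMk_left (κ := (⟨π, hπ⟩ : Kernel X Y)) hA

lemma saDist_apply {μ : Measure X} {π : X → Measure Y} (hπ : Measurable π)
    (hp : ∀ s, IsProbabilityMeasure (π s)) {A : Set (X × Y)} (hA : MeasurableSet A) :
    saDist μ π A = ∫⁻ s, π s (Prod.mk s ⁻¹' A) ∂μ := by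
  rw [saDist, Measure.bind_apply hA (measurable_pairKernel hπ hp).aemeasurable]
  simp_rw [Measure.map_apply measurable_prodMk_left hA]

lemma isProb_saDist (μ : Measure X) [IsProbabilityMeasure μ] {π : X → Measure Y}
    (hπ : Measurable π) (hp : ∀ s, IsProbabilityMeasure (π s)) :
    IsProbabilityMeasure (saDist μ π) := by
  constructor
  rw [saDist_apply hπ hp MeasurableSet.univ]
  calc ∫⁻ s, π s (Prod.mk s ⁻¹' (Set.univ : Set (X × Y))) ∂μ
      = ∫⁻ _, 1 ∂μ := lintegral_congr fun s => by
        simpa [Set.preimage_univ] using (hp s).measure_univ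
    _ = 1 := by simp

lemma isProb_bind (ρ : Measure X) [IsProbabilityMeasure ρ] {T : X → Measure Y}
    (hT : Measurable T) (hp : ∀ p, IsProbabilityMeasure (T p)) :
    IsProbabilityMeasure (ρ.bind T) := by
  constructor
  rw [Measure.bind_apply MeasurableSet.univ hT.aemeasurable]
  calc ∫⁻ p, T p Set.univ ∂ρ = ∫⁻ _, 1 ∂ρ := lintegral_congr fun p => (hp p).measure_univ
    _ = 1 := by simp

lemma saDist_map_fst (μ : Measure X) {π : X → Measure Y} (hπ : Measurable π)
    (hp : ∀ s, IsProbabilityMeasure (π s)) : (saDist μ π).map Prod.fst = μ := by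
  ext A hA
  rw [Measure.map_apply measurable_fst hA, saDist_apply hπ hp (measurable_fst hA)]
  have hpt : ∀ s, π s (Prod.mk s ⁻¹' ((Prod.fst : X × Y → X) ⁻¹' A)) = A.indicator (fun _ => 1) s := by
    intro s
    by_cases hs : s ∈ A
    · have he : Prod.mk s ⁻¹' ((Prod.fst : X × Y → X) ⁻¹' A) = Set.univ := by
        ext a; simp [hs]
      rw [he, (hp s).measure_univ, Set.indicator_of_mem hs]
    · have he : Prod.mk s ⁻¹' ((Prod.fst : X × Y → X) ⁻¹' A) = ∅ := by
        ext a; simp [hs]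
      rw [he, measure_empty, Set.indicator_of_notMem hs]
  rw [lintegral_congr hpt]
  exact lintegral_indicator_one hA

lemma integral_fst_saDist (μ : Measure X) {π : X → Measure Y} (hπ : Measurable π)
    (hp : ∀ s, IsProbabilityMeasure (π s)) {f : X → ℝ} (hf : Measurable f) :
    ∫ p, f p.1 ∂(saDist μ π) = ∫ s, f s ∂μ := by
  conv_rhs => rw [← saDist_map_fst μ hπ hp]
  rw [integral_map measurable_fst.aemeasurable hf.aestronglyMeasurable]

lemma tvDist_saDist_le (μ ν : Measure X) [IsProbabilityMeasure μ] [IsProbabilityMeasure ν]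
    {π1 π2 : X → Measure Y} (h1 : Measurable π1) (h2 : Measurable π2)
    (p1 : ∀ s, IsProbabilityMeasure (π1 s)) (p2 : ∀ s, IsProbabilityMeasure (π2 s))
    {ε : ℝ} (hε : ∀ s, tvDist (π1 s) (π2 s) ≤ ε) :
    tvDist (saDist μ π1) (saDist ν π2) ≤ tvDist μ ν + ε := by
  haveI := isProb_saDist μ h1 p1
  haveI := isProb_saDist ν h2 p2
  have hX : Nonempty X := nonempty_of_prob μ
  have hε0 : 0 ≤ ε := le_trans (tv_nonneg _ _) (hε hX.some)
  haveI : IsMarkovKernel (⟨π1, h1⟩ : Kernel X Y) := ⟨fun a => p1 a⟩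
  haveI : IsMarkovKernel (⟨π2, h2⟩ : Kernel X Y) := ⟨fun a => p2 a⟩
  refine Real.iSup_le ?_ (by linarith [tv_nonneg μ ν])
  rintro ⟨A, hA⟩
  set f1 : X → ℝ := fun s => (π1 s (Prod.mk s ⁻¹' A)).toReal with hf1def
  set f2 : X → ℝ := fun s => (π2 s (Prod.mk s ⁻¹' A)).toReal with hf2def
  have hm1 : Measurable f1 :=
    (Kernel.measurable_kernel_prodMk_left (κ := (⟨π1, h1⟩ : Kernel X Y)) hA).ennreal_toReal
  have hm2 : Measurable f2 :=
    (Kernel.measurable_kernel_prodMk_left (κ := (⟨π2, h2⟩ : Kernel X Y)) hA).ennreal_toReal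
  have hb1 : ∀ s, f1 s ≤ 1 := fun s => by
    haveI := p1 s; exact toReal_prob_le_one _ _
  have hb2 : ∀ s, f2 s ≤ 1 := fun s => by
    haveI := p2 s; exact toReal_prob_le_one _ _
  have h01 : ∀ s, (0:ℝ) ≤ f1 s := fun s => ENNReal.toReal_nonneg
  have h02 : ∀ s, (0:ℝ) ≤ f2 s := fun s => ENNReal.toReal_nonneg
  have key1 : ((saDist μ π1) A).toReal = ∫ s, f1 s ∂μ := by
    rw [saDist_apply h1 p1 hA]
    exact (integral_toReal
      ((Kernel.measurable_kernel_prodMk_left (κ := (⟨π1, h1⟩ : Kernel X Y)) hA)).aemeasurable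
      (Filter.Eventually.of_forall fun s => by haveI := p1 s; exact measure_lt_top _ _)).symm
  have key2 : ((saDist ν π2) A).toReal = ∫ s, f2 s ∂ν := by
    rw [saDist_apply h2 p2 hA]
    exact (integral_toReal
      ((Kernel.measurable_kernel_prodMk_left (κ := (⟨π2, h2⟩ : Kernel X Y)) hA)).aemeasurable
      (Filter.Eventually.of_forall fun s => by haveI := p2 s; exact measure_lt_top _ _)).symm
  have hint1 : Integrable f1 μ := integrable_of_bounds μ hm1 h01 hb1
  have hint2 : Integrable f2 μ := integrable_of_bounds μ hm2 h02 hb2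
  have habs : ∀ s, |f1 s - f2 s| ≤ ε := fun s => by
    haveI := p1 s; haveI := p2 s
    exact le_trans (abs_apply_le_tv (π1 s) (π2 s) (hA.preimage measurable_prodMk_left)) (hε s)
  have term1 : |∫ s, f1 s ∂μ - ∫ s, f2 s ∂μ| ≤ ε := by
    rw [← integral_sub hint1 hint2]
    calc |∫ s, (f1 s - f2 s) ∂μ| ≤ ∫ s, |f1 s - f2 s| ∂μ := by
          simpa [Real.norm_eq_abs] using
            norm_integral_le_integral_norm (μ := μ) (fun s => f1 s - f2 s)
      _ ≤ ∫ _, ε ∂μ := integral_mono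
            (integrable_of_bounds μ (hm1.sub hm2).abs (fun s => abs_nonneg _) habs)
            (integrable_const ε) habs
      _ = ε := by simp
  have term2 : |∫ s, f2 s ∂μ - ∫ s, f2 s ∂ν| ≤ tvDist μ ν := by
    simpa using abs_integral_sub_le_tv μ ν (C := 1) hm2 h02 hb2
  calc |((saDist μ π1) A).toReal - ((saDist ν π2) A).toReal|
      = |(∫ s, f1 s ∂μ) - ∫ s, f2 s ∂ν| := by rw [key1, key2]
    _ ≤ |(∫ s, f1 s ∂μ) - ∫ s, f2 s ∂μ| + |(∫ s, f2 s ∂μ) - ∫ s, f2 s ∂ν| := abs_sub_le _ _ _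
    _ ≤ ε + tvDist μ ν := add_le_add term1 term2
    _ = tvDist μ ν + ε := add_comm _ _

lemma tvDist_bind_le (ρ1 ρ2 : Measure X) [IsProbabilityMeasure ρ1] [IsProbabilityMeasure ρ2]
    {T1 T2 : X → Measure Y} (h1 : Measurable T1) (h2 : Measurable T2)
    (p1 : ∀ p, IsProbabilityMeasure (T1 p)) (p2 : ∀ p, IsProbabilityMeasure (T2 p))
    {G : X → ℝ} (hG : Measurable G) (hG1 : ∀ p, G p ≤ 1)
    (hpt : ∀ p, tvDist (T1 p) (T2 p) ≤ G p) :
    tvDist (ρ1.bind T1) (ρ2.bind T2) ≤ tvDist ρ1 ρ2 + ∫ p, G p ∂ρ1 := by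
  haveI := isProb_bind ρ1 h1 p1
  haveI := isProb_bind ρ2 h2 p2
  have hG0 : ∀ p, 0 ≤ G p := fun p => le_trans (tv_nonneg _ _) (hpt p)
  have hintG : Integrable G ρ1 := integrable_of_bounds ρ1 hG hG0 hG1
  refine Real.iSup_le ?_ (add_nonneg (tv_nonneg _ _) (integral_nonneg hG0))
  rintro ⟨A, hA⟩
  set f1 : X → ℝ := fun p => (T1 p A).toReal with hf1def
  set f2 : X → ℝ := fun p => (T2 p A).toReal with hf2def
  have hm1 : Measurable f1 := ((Measure.measurable_coe hA).comp h1).ennreal_toReal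
  have hm2 : Measurable f2 := ((Measure.measurable_coe hA).comp h2).ennreal_toReal
  have hb1 : ∀ p, f1 p ≤ 1 := fun p => by haveI := p1 p; exact toReal_prob_le_one _ _
  have hb2 : ∀ p, f2 p ≤ 1 := fun p => by haveI := p2 p; exact toReal_prob_le_one _ _
  have h01 : ∀ p, (0:ℝ) ≤ f1 p := fun p => ENNReal.toReal_nonneg
  have h02 : ∀ p, (0:ℝ) ≤ f2 p := fun p => ENNReal.toReal_nonneg
  have key1 : ((ρ1.bind T1) A).toReal = ∫ p, f1 p ∂ρ1 := by
    rw [Measure.bind_apply hA h1.aemeasurable]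
    exact (integral_toReal ((Measure.measurable_coe hA).comp h1).aemeasurable
      (Filter.Eventually.of_forall fun p => by haveI := p1 p; exact measure_lt_top _ _)).symm
  have key2 : ((ρ2.bind T2) A).toReal = ∫ p, f2 p ∂ρ2 := by
    rw [Measure.bind_apply hA h2.aemeasurable]
    exact (integral_toReal ((Measure.measurable_coe hA).comp h2).aemeasurable
      (Filter.Eventually.of_forall fun p => by haveI := p2 p; exact measure_lt_top _ _)).symm
  have hint1 : Integrable f1 ρ1 := integrable_of_bounds ρ1 hm1 h01 hb1
  have hint2 : Integrable f2 ρ1 := integrable_of_bounds ρ1 hm2 h02 hb2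
  have habs : ∀ p, |f1 p - f2 p| ≤ G p := fun p => by
    haveI := p1 p; haveI := p2 p
    exact le_trans (abs_apply_le_tv (T1 p) (T2 p) hA) (hpt p)
  have term1 : |∫ p, f1 p ∂ρ1 - ∫ p, f2 p ∂ρ1| ≤ ∫ p, G p ∂ρ1 := by
    rw [← integral_sub hint1 hint2]
    calc |∫ p, (f1 p - f2 p) ∂ρ1| ≤ ∫ p, |f1 p - f2 p| ∂ρ1 := by
          simpa [Real.norm_eq_abs] using
            norm_integral_le_integral_norm (μ := ρ1) (fun p => f1 p - f2 p)
      _ ≤ ∫ p, G p ∂ρ1 := integral_mono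
            (integrable_of_bounds ρ1 (hm1.sub hm2).abs (fun p => abs_nonneg _)
              (fun p => le_trans (habs p) (hG1 p)))
            hintG habs
  have term2 : |∫ p, f2 p ∂ρ1 - ∫ p, f2 p ∂ρ2| ≤ tvDist ρ1 ρ2 := by
    simpa using abs_integral_sub_le_tv ρ1 ρ2 (C := 1) hm2 h02 hb2
  calc |((ρ1.bind T1) A).toReal - ((ρ2.bind T2) A).toReal|
      = |(∫ p, f1 p ∂ρ1) - ∫ p, f2 p ∂ρ2| := by rw [key1, key2]
    _ ≤ |(∫ p, f1 p ∂ρ1) - ∫ p, f2 p ∂ρ1| + |(∫ p, f2 p ∂ρ1) - ∫ p, f2 p ∂ρ2| :=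
        abs_sub_le _ _ _
    _ ≤ (∫ p, G p ∂ρ1) + tvDist ρ1 ρ2 := add_le_add term1 term2
    _ = tvDist ρ1 ρ2 + ∫ p, G p ∂ρ1 := add_comm _ _

end Aux2

section Aux3

variable {X Y : Type*} [MeasurableSpace X] [MeasurableSpace Y]

lemma stateDist_zero {S Act : Type*} [MeasurableSpace S] [MeasurableSpace Act]
    (μ0 : Measure S) (π : ℕ → S → Measure Act) (T : ℕ → S × Act → Measure S) :
    stateDist μ0 π T 0 = μ0 := rfl

lemma stateDist_succ {S Act : Type*} [MeasurableSpace S] [MeasurableSpace Act]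
    (μ0 : Measure S) (π : ℕ → S → Measure Act) (T : ℕ → S × Act → Measure S) (t : ℕ) :
    stateDist μ0 π T (t + 1) = (saDist (stateDist μ0 π T t) (π t)).bind (T t) := rfl

lemma occ_prob {β : ℝ} (hβ0 : 0 ≤ β) (hβ1 : β < 1) (ρ : ℕ → Measure X)
    (hρ : ∀ t, IsProbabilityMeasure (ρ t)) : IsFiniteMeasure (occ β ρ) := by
  constructor
  rw [occ, Measure.sum_apply _ MeasurableSet.univ]
  have hc : ∀ t : ℕ, (ENNReal.ofReal ((1 - β) * β ^ t) • ρ t) Set.univ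
      = ENNReal.ofReal (1 - β) * ENNReal.ofReal β ^ t := by
    intro t
    rw [Measure.smul_apply, (hρ t).measure_univ, smul_eq_mul, mul_one,
      ENNReal.ofReal_mul (by linarith), ENNReal.ofReal_pow hβ0]
  rw [tsum_congr hc, ENNReal.tsum_mul_left, ENNReal.tsum_geometric]
  have h1 : ENNReal.ofReal (1 - β) ≠ ⊤ := ENNReal.ofReal_ne_top
  have h2 : (1 - ENNReal.ofReal β)⁻¹ ≠ ⊤ := by
    rw [Ne, ENNReal.inv_eq_top]
    exact (tsub_pos_iff_lt.2 (ENNReal.ofReal_lt_one.2 hβ1)).ne'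
  exact ENNReal.mul_lt_top (h1.lt_top) (h2.lt_top)

lemma value_eq_tsum {β : ℝ} (hβ0 : 0 ≤ β) (hβ1 : β < 1)
    {S Act : Type*} [MeasurableSpace S] [MeasurableSpace Act]
    (μ0 : Measure S) (π : ℕ → S → Measure Act) (T : ℕ → S × Act → Measure S)
    (hρ : ∀ t, IsProbabilityMeasure (saDistAt μ0 π T t))
    {rew : S × Act → ℝ} {R : ℝ} (hrew : Measurable rew)
    (h0 : ∀ p, 0 ≤ rew p) (h1 : ∀ p, rew p ≤ R) :
    value β rew μ0 π T
      = (1 - β)⁻¹ * ∑' t, ((1 - β) * β ^ t) * ∫ p, rew p ∂(saDistAt μ0 π T t) := by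
  haveI := occ_prob hβ0 hβ1 _ hρ
  have hint : Integrable rew (occ β (saDistAt μ0 π T)) :=
    integrable_of_bounds _ hrew h0 h1
  have hint2 : Integrable rew
      (Measure.sum fun t => ENNReal.ofReal ((1 - β) * β ^ t) • saDistAt μ0 π T t) := hint
  rw [value, occ, integral_sum_measure hint2]
  congr 1
  refine tsum_congr fun t => ?_
  rw [integral_smul_measure, ENNReal.toReal_ofReal
    (mul_nonneg (by linarith) (pow_nonneg hβ0 t)), smul_eq_mul]

end Aux3

/-- value divergence under an `n`-chunk branched rollout.
Each process `i ∈ {1,2}` performs a branched rollout: for the `n` macro-steps of the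
branch it uses the "post"-branch pair `(π^post_i, T^post_i)`, and elsewhere (the part of
the rollout governed by the behavior data-collection process, whose errors are discounted
by at least `(γ^k)^{n+1}` in the return) it uses the "pre"-branch pair
`(π^pre_i, T^pre_i)`.  Chunk rewards are bounded by `r_max (1 − γ^k)/(1 − γ)` (per-step
rewards in `[0, r_max]`).  If the pre- and post-branch dynamics discrepancies (in expectation
over the macro-step-`t` state distribution of process `1`, uniformly over chunk actions
and over `t`) are bounded by `ε_m^{k,pre}`, `ε_m^{k,post}`, and the pre- and post-branch
policy TV divergences are bounded by `ε_π^{k,pre}`, `ε_π^{k,post}`, then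
`|V(π₁^k) − V(π₂^k)| ≤ (2 r_max/(1−γ)) [ n ε_m^{k,post} + (n+1) ε_π^{k,post}
   + ((γ^k)^{n+1}/(1−γ^k)) (ε_m^{k,pre} + ε_π^{k,pre}) + (γ^k)^n ε_π^{k,pre} ]`. -/
theorem abs_value_sub_le_of_branched_rollout_errors
    {S Act : Type*} [MeasurableSpace S] [MeasurableSpace Act]
    (γ rmax : ℝ) (k : ℕ) (n : ℕ) (hγ0 : 0 < γ) (hγ1 : γ < 1) (hk : 1 ≤ k)
    (μ0 : Measure S) [IsProbabilityMeasure μ0]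
    (πpre1 πpre2 πpost1 πpost2 : S → Measure Act)
    (Tpre1 Tpre2 Tpost1 Tpost2 : S × Act → Measure S)
    (hπpre1 : Measurable πpre1) (hπpre2 : Measurable πpre2)
    (hπpost1 : Measurable πpost1) (hπpost2 : Measurable πpost2)
    (hTpre1 : Measurable Tpre1) (hTpre2 : Measurable Tpre2)
    (hTpost1 : Measurable Tpost1) (hTpost2 : Measurable Tpost2)
    (hπpre1p : ∀ s, IsProbabilityMeasure (πpre1 s))
    (hπpre2p : ∀ s, IsProbabilityMeasure (πpre2 s))
    (hπpost1p : ∀ s, IsProbabilityMeasure (πpost1 s))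
    (hπpost2p : ∀ s, IsProbabilityMeasure (πpost2 s))
    (hTpre1p : ∀ p, IsProbabilityMeasure (Tpre1 p))
    (hTpre2p : ∀ p, IsProbabilityMeasure (Tpre2 p))
    (hTpost1p : ∀ p, IsProbabilityMeasure (Tpost1 p))
    (hTpost2p : ∀ p, IsProbabilityMeasure (Tpost2 p))
    (rew : S × Act → ℝ) (hrew : Measurable rew)
    (hr0 : ∀ p, 0 ≤ rew p) (hr1 : ∀ p, rew p ≤ rmax * (1 - γ ^ k) / (1 - γ))
    (επpre επpost εmpre εmpost : ℝ)
    (hεπpre : ∀ s, tvDist (πpre1 s) (πpre2 s) ≤ επpre)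
    (hεπpost : ∀ s, tvDist (πpost1 s) (πpost2 s) ≤ επpost)
    (hmeaspre : Measurable fun s : S => ⨆ a : Act, tvDist (Tpre1 (s, a)) (Tpre2 (s, a)))
    (hmeaspost : Measurable fun s : S => ⨆ a : Act, tvDist (Tpost1 (s, a)) (Tpost2 (s, a)))
    (hεmpre : ∀ t : ℕ,
      ∫ s, (⨆ a : Act, tvDist (Tpre1 (s, a)) (Tpre2 (s, a)))
          ∂(stateDist μ0 (fun t => if t < n then πpost1 else πpre1)
              (fun t => if t < n then Tpost1 else Tpre1) t) ≤ εmpre)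
    (hεmpost : ∀ t : ℕ,
      ∫ s, (⨆ a : Act, tvDist (Tpost1 (s, a)) (Tpost2 (s, a)))
          ∂(stateDist μ0 (fun t => if t < n then πpost1 else πpre1)
              (fun t => if t < n then Tpost1 else Tpre1) t) ≤ εmpost) :
    |value (γ ^ k) rew μ0 (fun t => if t < n then πpost1 else πpre1)
        (fun t => if t < n then Tpost1 else Tpre1) -
      value (γ ^ k) rew μ0 (fun t => if t < n then πpost2 else πpre2)
        (fun t => if t < n then Tpost2 else Tpre2)|
      ≤ 2 * rmax / (1 - γ) *
          (n * εmpost + (n + 1) * επpost +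
            (γ ^ k) ^ (n + 1) / (1 - γ ^ k) * (εmpre + επpre) + (γ ^ k) ^ n * επpre) := by
  have hβ0 : (0:ℝ) < γ ^ k := pow_pos hγ0 k
  have hβ1 : γ ^ k < 1 := pow_lt_one₀ hγ0.le hγ1 (by omega)
  set β : ℝ := γ ^ k with hβdef
  have h1β : 0 < 1 - β := by linarith
  have h1γ : 0 < 1 - γ := by linarith
  have hS : Nonempty S := nonempty_of_prob μ0
  obtain ⟨s0⟩ := hS
  haveI := hπpre1p s0
  have hActNE : Nonempty Act := nonempty_of_prob (πpre1 s0)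
  obtain ⟨a0⟩ := hActNE
  set π1 : ℕ → S → Measure Act := fun t => if t < n then πpost1 else πpre1 with hπ1def
  set π2 : ℕ → S → Measure Act := fun t => if t < n then πpost2 else πpre2 with hπ2def
  set T1 : ℕ → S × Act → Measure S := fun t => if t < n then Tpost1 else Tpre1 with hT1def
  set T2 : ℕ → S × Act → Measure S := fun t => if t < n then Tpost2 else Tpre2 with hT2def
  have hπ1m : ∀ t, Measurable (π1 t) := by
    intro t; simp only [hπ1def]; split_ifs; exacts [hπpost1, hπpre1]
  have hπ2m : ∀ t, Measurable (π2 t) := by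
    intro t; simp only [hπ2def]; split_ifs; exacts [hπpost2, hπpre2]
  have hT1m : ∀ t, Measurable (T1 t) := by
    intro t; simp only [hT1def]; split_ifs; exacts [hTpost1, hTpre1]
  have hT2m : ∀ t, Measurable (T2 t) := by
    intro t; simp only [hT2def]; split_ifs; exacts [hTpost2, hTpre2]
  have hπ1p : ∀ t s, IsProbabilityMeasure (π1 t s) := by
    intro t s; simp only [hπ1def]; split_ifs; exacts [hπpost1p s, hπpre1p s]
  have hπ2p : ∀ t s, IsProbabilityMeasure (π2 t s) := by
    intro t s; simp only [hπ2def]; split_ifs; exacts [hπpost2p s, hπpre2p s]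
  have hT1p : ∀ t p, IsProbabilityMeasure (T1 t p) := by
    intro t p; simp only [hT1def]; split_ifs; exacts [hTpost1p p, hTpre1p p]
  have hT2p : ∀ t p, IsProbabilityMeasure (T2 t p) := by
    intro t p; simp only [hT2def]; split_ifs; exacts [hTpost2p p, hTpre2p p]
  have hd1p : ∀ t, IsProbabilityMeasure (stateDist μ0 π1 T1 t) := by
    intro t; induction t with
    | zero => rw [stateDist_zero]; infer_instance
    | succ t ih =>
      rw [stateDist_succ]
      haveI := ih
      haveI := isProb_saDist (stateDist μ0 π1 T1 t) (hπ1m t) (hπ1p t)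
      exact isProb_bind _ (hT1m t) (hT1p t)
  have hd2p : ∀ t, IsProbabilityMeasure (stateDist μ0 π2 T2 t) := by
    intro t; induction t with
    | zero => rw [stateDist_zero]; infer_instance
    | succ t ih =>
      rw [stateDist_succ]
      haveI := ih
      haveI := isProb_saDist (stateDist μ0 π2 T2 t) (hπ2m t) (hπ2p t)
      exact isProb_bind _ (hT2m t) (hT2p t)
  have hρ1p : ∀ t, IsProbabilityMeasure (saDistAt μ0 π1 T1 t) := fun t => by
    haveI := hd1p t
    exact isProb_saDist _ (hπ1m t) (hπ1p t)
  have hρ2p : ∀ t, IsProbabilityMeasure (saDistAt μ0 π2 T2 t) := fun t => by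
    haveI := hd2p t
    exact isProb_saDist _ (hπ2m t) (hπ2p t)
  have hεπpre0 : 0 ≤ επpre := le_trans (tv_nonneg _ _) (hεπpre s0)
  have hεπpost0 : 0 ≤ επpost := le_trans (tv_nonneg _ _) (hεπpost s0)
  have hεmpre0 : 0 ≤ εmpre := le_trans (integral_nonneg fun s =>
      Real.iSup_nonneg fun a => tv_nonneg _ _) (hεmpre 0)
  have hεmpost0 : 0 ≤ εmpost := le_trans (integral_nonneg fun s =>
      Real.iSup_nonneg fun a => tv_nonneg _ _) (hεmpost 0)
  set eπ : ℕ → ℝ := fun t => if t < n then επpost else επpre with heπdef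
  set em : ℕ → ℝ := fun t => if t < n then εmpost else εmpre with hemdef
  have heπ0 : ∀ t, 0 ≤ eπ t := by
    intro t; simp only [heπdef]; split_ifs; exacts [hεπpost0, hεπpre0]
  have heπle : ∀ t s, tvDist (π1 t s) (π2 t s) ≤ eπ t := by
    intro t s; simp only [hπ1def, hπ2def, heπdef]; split_ifs
    exacts [hεπpost s, hεπpre s]
  -- TV recursion
  have htv : ∀ t, tvDist (stateDist μ0 π1 T1 t) (stateDist μ0 π2 T2 t)
      ≤ ∑ u ∈ Finset.range t, (eπ u + em u) := by
    intro t; induction t with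
    | zero => simp [stateDist_zero, tv_self]
    | succ t ih =>
      haveI := hd1p t; haveI := hd2p t
      haveI := isProb_saDist (stateDist μ0 π1 T1 t) (hπ1m t) (hπ1p t)
      haveI := isProb_saDist (stateDist μ0 π2 T2 t) (hπ2m t) (hπ2p t)
      rw [stateDist_succ, stateDist_succ, Finset.sum_range_succ]
      set Gt : S → ℝ := fun s => ⨆ a, tvDist (T1 t (s, a)) (T2 t (s, a)) with hGtdef
      have hGtm : Measurable Gt := by
        by_cases h : t < n
        · have hg : Gt = fun s => ⨆ a, tvDist (Tpost1 (s, a)) (Tpost2 (s, a)) := by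
            funext s; simp only [hGtdef, hT1def, hT2def, if_pos h]
          rw [hg]; exact hmeaspost
        · have hg : Gt = fun s => ⨆ a, tvDist (Tpre1 (s, a)) (Tpre2 (s, a)) := by
            funext s; simp only [hGtdef, hT1def, hT2def, if_neg h]
          rw [hg]; exact hmeaspre
      have hGt1 : ∀ s, Gt s ≤ 1 := by
        intro s
        refine Real.iSup_le (fun a => ?_) zero_le_one
        haveI := hT1p t (s, a); haveI := hT2p t (s, a)
        exact tv_le_one _ _
      have hGtpt : ∀ p : S × Act, tvDist (T1 t p) (T2 t p) ≤ Gt p.1 := by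
        intro p
        have hbdd : BddAbove (Set.range fun a => tvDist (T1 t (p.1, a)) (T2 t (p.1, a))) := by
          refine ⟨1, ?_⟩
          rintro x ⟨a, rfl⟩
          haveI := hT1p t (p.1, a); haveI := hT2p t (p.1, a)
          exact tv_le_one _ _
        simpa using le_ciSup hbdd p.2
      have hstep1 := tvDist_bind_le (saDist (stateDist μ0 π1 T1 t) (π1 t))
        (saDist (stateDist μ0 π2 T2 t) (π2 t)) (hT1m t) (hT2m t) (hT1p t) (hT2p t)
        (G := fun p : S × Act => Gt p.1) (hGtm.comp measurable_fst) (fun p => hGt1 p.1) hGtpt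
      have hstep2 : ∫ p : S × Act, Gt p.1 ∂(saDist (stateDist μ0 π1 T1 t) (π1 t)) ≤ em t := by
        rw [integral_fst_saDist _ (hπ1m t) (hπ1p t) hGtm]
        by_cases h : t < n
        · have hg : Gt = fun s => ⨆ a, tvDist (Tpost1 (s, a)) (Tpost2 (s, a)) := by
            funext s; simp only [hGtdef, hT1def, hT2def, if_pos h]
          have hm : em t = εmpost := by simp only [hemdef, if_pos h]
          rw [hg, hm]
          exact hεmpost t
        · have hg : Gt = fun s => ⨆ a, tvDist (Tpre1 (s, a)) (Tpre2 (s, a)) := by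
            funext s; simp only [hGtdef, hT1def, hT2def, if_neg h]
          have hm : em t = εmpre := by simp only [hemdef, if_neg h]
          rw [hg, hm]
          exact hεmpre t
      have hsa := tvDist_saDist_le (stateDist μ0 π1 T1 t) (stateDist μ0 π2 T2 t)
        (hπ1m t) (hπ2m t) (hπ1p t) (hπ2p t) (heπle t)
      linarith [hstep1, hstep2, hsa, ih]
  -- explicit bound on the cumulative error
  have hEmin : ∀ t, (∑ u ∈ Finset.range t, (eπ u + em u))
      ≤ ((min t n : ℕ) : ℝ) * (επpost + εmpost) + ((t - n : ℕ) : ℝ) * (επpre + εmpre) := by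
    intro t; induction t with
    | zero => simp
    | succ t ih =>
      rw [Finset.sum_range_succ]
      by_cases h : t < n
      · have h1 : min (t+1) n = min t n + 1 := by omega
        have h2 : t + 1 - n = 0 := by omega
        have h3 : t - n = 0 := by omega
        rw [h1, h2]
        rw [h3] at ih
        have he : eπ t + em t = επpost + εmpost := by
          simp only [heπdef, hemdef, if_pos h]
        rw [he]
        push_cast
        push_cast at ih
        linarith
      · have h1 : min (t+1) n = min t n := by omega
        have h2 : t + 1 - n = (t - n) + 1 := by omega
        have he : eπ t + em t = επpre + εmpre := by
          simp only [heπdef, hemdef, if_neg h]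
        rw [h1, h2, he]
        push_cast
        push_cast at ih
        linarith
  have htvρ : ∀ t, tvDist (saDistAt μ0 π1 T1 t) (saDistAt μ0 π2 T2 t)
      ≤ (n : ℝ) * (επpost + εmpost) + ((t - n : ℕ) : ℝ) * (επpre + εmpre) + eπ t := by
    intro t
    haveI := hd1p t; haveI := hd2p t
    have h1 := tvDist_saDist_le (stateDist μ0 π1 T1 t) (stateDist μ0 π2 T2 t)
      (hπ1m t) (hπ2m t) (hπ1p t) (hπ2p t) (heπle t)
    have h2 := htv t
    have h3 := hEmin t
    have h4 : ((min t n : ℕ) : ℝ) ≤ (n : ℝ) := Nat.cast_le.2 (min_le_right t n)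
    have h5 : (0:ℝ) ≤ επpost + εmpost := by linarith
    have h6 := mul_le_mul_of_nonneg_right h4 h5
    have h7 : saDistAt μ0 π1 T1 t = saDist (stateDist μ0 π1 T1 t) (π1 t) := rfl
    have h8 : saDistAt μ0 π2 T2 t = saDist (stateDist μ0 π2 T2 t) (π2 t) := rfl
    rw [h7, h8]
    linarith
  -- values as series
  have hV1 : value β rew μ0 π1 T1
      = (1 - β)⁻¹ * ∑' t, ((1 - β) * β ^ t) * ∫ p, rew p ∂(saDistAt μ0 π1 T1 t) :=
    value_eq_tsum hβ0.le hβ1 μ0 π1 T1 hρ1p hrew hr0 hr1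
  have hV2 : value β rew μ0 π2 T2
      = (1 - β)⁻¹ * ∑' t, ((1 - β) * β ^ t) * ∫ p, rew p ∂(saDistAt μ0 π2 T2 t) :=
    value_eq_tsum hβ0.le hβ1 μ0 π2 T2 hρ2p hrew hr0 hr1
  set J1 : ℕ → ℝ := fun t => ∫ p, rew p ∂(saDistAt μ0 π1 T1 t) with hJ1def
  set J2 : ℕ → ℝ := fun t => ∫ p, rew p ∂(saDistAt μ0 π2 T2 t) with hJ2def
  set R : ℝ := rmax * (1 - β) / (1 - γ) with hRdef
  have hR0 : 0 ≤ R := le_trans (hr0 (s0, a0)) (hr1 (s0, a0))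
  have hrmax0 : 0 ≤ rmax := by
    have h' : 0 ≤ rmax * (1 - β) := by
      have hh := mul_nonneg hR0 h1γ.le
      rwa [hRdef, div_mul_cancel₀ _ h1γ.ne'] at hh
    have hh2 := div_nonneg h' h1β.le
    rwa [mul_div_cancel_right₀ _ h1β.ne'] at hh2
  have hJb : ∀ t, |J1 t - J2 t|
      ≤ R * ((n : ℝ) * (επpost + εmpost) + ((t - n : ℕ) : ℝ) * (επpre + εmpre) + eπ t) := by
    intro t
    haveI := hρ1p t; haveI := hρ2p t
    exact le_trans (abs_integral_sub_le_tv _ _ hrew hr0 hr1)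
      (mul_le_mul_of_nonneg_left (htvρ t) hR0)
  have hJ1le : ∀ t, |J1 t| ≤ R := fun t => by
    haveI := hρ1p t
    rw [hJ1def]
    rw [abs_of_nonneg (integral_nonneg hr0)]
    calc (∫ p, rew p ∂(saDistAt μ0 π1 T1 t)) ≤ ∫ _, R ∂(saDistAt μ0 π1 T1 t) :=
          integral_mono (integrable_of_bounds _ hrew hr0 hr1) (integrable_const R) hr1
      _ = R := by simp
  have hJ2le : ∀ t, |J2 t| ≤ R := fun t => by
    haveI := hρ2p t
    rw [hJ2def]
    rw [abs_of_nonneg (integral_nonneg hr0)]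
    calc (∫ p, rew p ∂(saDistAt μ0 π2 T2 t)) ≤ ∫ _, R ∂(saDistAt μ0 π2 T2 t) :=
          integral_mono (integrable_of_bounds _ hrew hr0 hr1) (integrable_const R) hr1
      _ = R := by simp
  -- summabilities
  have sgeo : Summable fun t : ℕ => β ^ t := summable_geometric_of_lt_one hβ0.le hβ1
  have hnorm : ‖β‖ < 1 := by rw [Real.norm_eq_abs, abs_of_pos hβ0]; exact hβ1
  have su2 : Summable fun t : ℕ => β ^ t * ((t - n : ℕ) : ℝ) := by
    refine Summable.of_nonneg_of_le
      (fun t => mul_nonneg (pow_nonneg hβ0.le t) (Nat.cast_nonneg _)) (fun t => ?_)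
      (summable_pow_mul_geometric_of_norm_lt_one 1 hnorm)
    have hc : ((t - n : ℕ) : ℝ) ≤ (t : ℝ) := Nat.cast_le.2 (Nat.sub_le t n)
    calc β ^ t * ((t - n : ℕ) : ℝ) ≤ β ^ t * (t : ℝ) :=
          mul_le_mul_of_nonneg_left hc (pow_nonneg hβ0.le t)
      _ = (t : ℝ) ^ 1 * β ^ t := by ring
  have su3 : Summable fun t : ℕ => β ^ t * eπ t := by
    refine Summable.of_nonneg_of_le
      (fun t => mul_nonneg (pow_nonneg hβ0.le t) (heπ0 t)) (fun t => ?_)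
      (sgeo.mul_right (max επpost επpre))
    have hc : eπ t ≤ max επpost επpre := by
      simp only [heπdef]; split_ifs; exacts [le_max_left _ _, le_max_right _ _]
    exact mul_le_mul_of_nonneg_left hc (pow_nonneg hβ0.le t)
  set W : ℕ → ℝ := fun t => β ^ t *
    ((n : ℝ) * (επpost + εmpost) + ((t - n : ℕ) : ℝ) * (επpre + εmpre) + eπ t) with hWdef
  have hWeq : W = fun t => β ^ t * ((n : ℝ) * (επpost + εmpost))
      + ((β ^ t * ((t - n : ℕ) : ℝ)) * (επpre + εmpre) + β ^ t * eπ t) := by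
    funext t; simp only [hWdef]; ring
  have sW : Summable W := by
    rw [hWeq]
    exact (sgeo.mul_right _).add ((su2.mul_right _).add su3)
  -- tsum computations
  have hsum_geo : ∑' t : ℕ, β ^ t = (1 - β)⁻¹ := tsum_geometric_of_lt_one hβ0.le hβ1
  have hsum2 : ∑' t : ℕ, β ^ t * ((t - n : ℕ) : ℝ) = β ^ (n+1) / (1 - β) ^ 2 := by
    have hshift := Summable.sum_add_tsum_nat_add (f := fun t : ℕ => β ^ t * ((t - n : ℕ) : ℝ)) n su2
    have hzero : (∑ i ∈ Finset.range n, β ^ i * ((i - n : ℕ) : ℝ)) = 0 :=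
      Finset.sum_eq_zero fun i hi => by
        have hi' := Finset.mem_range.1 hi
        have h0 : i - n = 0 := by omega
        simp [h0]
    have htail : ∑' i : ℕ, β ^ (i + n) * (((i + n) - n : ℕ) : ℝ) = β ^ (n+1) / (1 - β) ^ 2 := by
      have hfe : (fun i : ℕ => β ^ (i + n) * (((i + n) - n : ℕ) : ℝ))
          = fun i : ℕ => β ^ n * ((i : ℝ) * β ^ i) := by
        funext i
        have h' : i + n - n = i := by omega
        rw [h', pow_add]; ring
      rw [hfe, tsum_mul_left, tsum_coe_mul_geometric_of_norm_lt_one hnorm]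
      rw [pow_succ]
      field_simp
      ring
    rw [← hshift, hzero, htail, zero_add]
  have hsum3 : ∑' t : ℕ, β ^ t * eπ t ≤ (1 - β)⁻¹ * επpost + β ^ n * (1 - β)⁻¹ * επpre := by
    have hshift := Summable.sum_add_tsum_nat_add (f := fun t : ℕ => β ^ t * eπ t) n su3
    rw [← hshift]
    have hfin : (∑ i ∈ Finset.range n, β ^ i * eπ i) ≤ (1 - β)⁻¹ * επpost := by
      have hcongr : ∀ i ∈ Finset.range n, β ^ i * eπ i = β ^ i * επpost := fun i hi => by
        simp only [heπdef, if_pos (Finset.mem_range.1 hi)]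
      rw [Finset.sum_congr rfl hcongr, ← Finset.sum_mul]
      have hps : (∑ i ∈ Finset.range n, β ^ i) ≤ (1 - β)⁻¹ := by
        calc (∑ i ∈ Finset.range n, β ^ i) ≤ ∑' i : ℕ, β ^ i :=
              Summable.sum_le_tsum (Finset.range n) (fun i _ => pow_nonneg hβ0.le i) sgeo
          _ = (1 - β)⁻¹ := hsum_geo
      exact mul_le_mul_of_nonneg_right hps hεπpost0
    have htail : ∑' i : ℕ, β ^ (i + n) * eπ (i + n) = β ^ n * (1 - β)⁻¹ * επpre := by
      have hfe : (fun i : ℕ => β ^ (i + n) * eπ (i + n))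
          = fun i : ℕ => (β ^ n * επpre) * β ^ i := by
        funext i
        simp only [heπdef, if_neg (by omega : ¬ i + n < n)]
        rw [pow_add]; ring
      rw [hfe, tsum_mul_left, hsum_geo]; ring
    rw [htail]
    linarith
  have hkey : ∑' t, W t ≤ (1 - β)⁻¹ *
      ((n : ℝ) * εmpost + ((n : ℝ) + 1) * επpost + β ^ (n+1) / (1 - β) * (εmpre + επpre)
        + β ^ n * επpre) := by
    have hsplit : ∑' t, W t = (1 - β)⁻¹ * ((n : ℝ) * (επpost + εmpost))
        + ((β ^ (n+1) / (1 - β) ^ 2) * (επpre + εmpre) + ∑' t : ℕ, β ^ t * eπ t) := by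
      rw [hWeq, Summable.tsum_add (sgeo.mul_right _) ((su2.mul_right _).add su3),
        Summable.tsum_add (su2.mul_right _) su3, tsum_mul_right, tsum_mul_right, hsum_geo, hsum2]
    have hfinal : (1 - β)⁻¹ * ((n : ℝ) * (επpost + εmpost))
        + ((β ^ (n+1) / (1 - β) ^ 2) * (επpre + εmpre)
          + ((1 - β)⁻¹ * επpost + β ^ n * (1 - β)⁻¹ * επpre))
        = (1 - β)⁻¹ * ((n : ℝ) * εmpost + ((n : ℝ) + 1) * επpost
            + β ^ (n+1) / (1 - β) * (εmpre + επpre) + β ^ n * επpre) := by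
      field_simp
      ring
    rw [hsplit]
    linarith [hsum3]
  -- assemble
  set a1 : ℕ → ℝ := fun t => ((1 - β) * β ^ t) * J1 t with ha1def
  set a2 : ℕ → ℝ := fun t => ((1 - β) * β ^ t) * J2 t with ha2def
  have hcoef : ∀ t : ℕ, 0 ≤ (1 - β) * β ^ t :=
    fun t => mul_nonneg h1β.le (pow_nonneg hβ0.le t)
  have sa1 : Summable a1 := by
    refine Summable.of_norm_bounded
      ((sgeo.mul_left (1 - β)).mul_right R) (fun t => ?_)
    simp only [ha1def, Real.norm_eq_abs, abs_mul, abs_of_nonneg (hcoef t)]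
    exact mul_le_mul_of_nonneg_left (hJ1le t) (hcoef t)
  have sa2 : Summable a2 := by
    refine Summable.of_norm_bounded
      ((sgeo.mul_left (1 - β)).mul_right R) (fun t => ?_)
    simp only [ha2def, Real.norm_eq_abs, abs_mul, abs_of_nonneg (hcoef t)]
    exact mul_le_mul_of_nonneg_left (hJ2le t) (hcoef t)
  have hdiffb : ∀ t, |a1 t - a2 t| ≤ ((1 - β) * R) * W t := by
    intro t
    have hd : a1 t - a2 t = ((1 - β) * β ^ t) * (J1 t - J2 t) := by
      simp only [ha1def, ha2def]; ring
    rw [hd, abs_mul, abs_of_nonneg (hcoef t)]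
    calc ((1 - β) * β ^ t) * |J1 t - J2 t|
        ≤ ((1 - β) * β ^ t) * (R * ((n : ℝ) * (επpost + εmpost)
            + ((t - n : ℕ) : ℝ) * (επpre + εmpre) + eπ t)) :=
          mul_le_mul_of_nonneg_left (hJb t) (hcoef t)
      _ = ((1 - β) * R) * W t := by simp only [hWdef]; ring
  have sdiff : Summable fun t => |a1 t - a2 t| :=
    Summable.of_nonneg_of_le (fun t => abs_nonneg _) hdiffb (sW.mul_left _)
  have habsd : |(∑' t, a1 t) - ∑' t, a2 t| ≤ ((1 - β) * R) * ∑' t, W t := by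
    rw [← Summable.tsum_sub sa1 sa2]
    calc |∑' t, (a1 t - a2 t)| ≤ ∑' t, |a1 t - a2 t| := by
          simpa [Real.norm_eq_abs] using
            norm_tsum_le_tsum_norm (f := fun t => a1 t - a2 t)
              (by simpa [Real.norm_eq_abs] using sdiff)
      _ ≤ ∑' t, ((1 - β) * R) * W t := Summable.tsum_le_tsum hdiffb sdiff (sW.mul_left _)
      _ = ((1 - β) * R) * ∑' t, W t := tsum_mul_left
  rw [hV1, hV2, ← mul_sub, abs_mul, abs_of_pos (inv_pos.2 h1β)]
  have hstuff0 : 0 ≤ (n : ℝ) * εmpost + ((n : ℝ) + 1) * επpost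
      + β ^ (n+1) / (1 - β) * (εmpre + επpre) + β ^ n * επpre := by
    have t1 : (0:ℝ) ≤ (n : ℝ) * εmpost := mul_nonneg (Nat.cast_nonneg _) hεmpost0
    have t2 : (0:ℝ) ≤ ((n : ℝ) + 1) * επpost :=
      mul_nonneg (by positivity) hεπpost0
    have t3 : (0:ℝ) ≤ β ^ (n+1) / (1 - β) * (εmpre + επpre) :=
      mul_nonneg (div_nonneg (pow_nonneg hβ0.le _) h1β.le) (by linarith)
    have t4 : (0:ℝ) ≤ β ^ n * επpre := mul_nonneg (pow_nonneg hβ0.le _) hεπpre0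
    linarith
  calc (1 - β)⁻¹ * |(∑' t, a1 t) - ∑' t, a2 t|
      ≤ (1 - β)⁻¹ * (((1 - β) * R) * ∑' t, W t) :=
        mul_le_mul_of_nonneg_left habsd (inv_pos.2 h1β).le
    _ ≤ (1 - β)⁻¹ * (((1 - β) * R) * ((1 - β)⁻¹ *
        ((n : ℝ) * εmpost + ((n : ℝ) + 1) * επpost
          + β ^ (n+1) / (1 - β) * (εmpre + επpre) + β ^ n * επpre))) := by
        refine mul_le_mul_of_nonneg_left ?_ (inv_pos.2 h1β).le
        exact mul_le_mul_of_nonneg_left hkey (mul_nonneg h1β.le hR0)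
    _ = (rmax / (1 - γ)) * ((n : ℝ) * εmpost + ((n : ℝ) + 1) * επpost
          + β ^ (n+1) / (1 - β) * (εmpre + επpre) + β ^ n * επpre) := by
        rw [hRdef]
        field_simp
    _ ≤ 2 * rmax / (1 - γ) * ((n : ℝ) * εmpost + ((n : ℝ) + 1) * επpost
          + β ^ (n+1) / (1 - β) * (εmpre + επpre) + β ^ n * επpre) := by
        have h6 : 0 ≤ rmax / (1 - γ) := div_nonneg hrmax0 h1γ.le
        have h7 : rmax / (1 - γ) ≤ 2 * rmax / (1 - γ) := by
          rw [mul_div_assoc]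
          linarith
        exact mul_le_mul_of_nonneg_right h7 hstuff0
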